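/- For all z, ζ ∈ 𝔻, the Berezin kernel K(z, ζ) = (1 − |z|²)²/|1 − ζ·conj(z)|⁴ satisfies the symmetry Δ_z [ (1 − |z|²)²/|1 − ζ·conj(z)|⁴ ] = Δ_ζ [ (1 − |ζ|²)²/|1 − conj(ζ)·z|⁴ ], where Δ_z denotes the Laplacian (∂²/∂x² + ∂²/∂y²)/4 = ∂²/∂z∂conj(z) taken with respect to the variable z, and Δ_ζ the same operator with respect to ζ. -/

import Mathlib

open MeasureTheory Complex Set

noncomputable section

/-- The open unit disk in the complex plane. -/
def unitDisk : Set ℂ := {z : ℂ | ‖z‖ < 1}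

/-- Normalized Lebesgue area measure `dA = dx dy / π` on the unit disk. -/
def dA : Measure ℂ := (ENNReal.ofReal Real.pi)⁻¹ • (volume.restrict unitDisk)

/-- The Berezin transform of a function `u`. -/
def berezin (u : ℂ → ℂ) (z : ℂ) : ℂ :=
  ∫ ζ, u ζ * (((1 - ‖z‖ ^ 2) ^ 2 / ‖1 - ζ * (starRingEnd ℂ) z‖ ^ 4 : ℝ) : ℂ) ∂dA

/-- The Möbius automorphism `φ_a(z) = (z - a)/(1 - conj(a) z)` of the unit disk. -/
def phiMoebius (a z : ℂ) : ℂ := (z - a) / (1 - (starRingEnd ℂ) a * z)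

/-- The (unnormalized) Laplacian `∂²/∂x² + ∂²/∂y²` of `h`, computed via real Fréchet derivatives. -/
def lap (h : ℂ → ℂ) (z : ℂ) : ℂ :=
  fderiv ℝ (fun w => fderiv ℝ h w 1) z 1 +
  fderiv ℝ (fun w => fderiv ℝ h w Complex.I) z Complex.I

/-- The normalized Laplacian `Δ = ∂²/∂z∂conj(z) = (1/4)(∂²/∂x² + ∂²/∂y²)`. -/
def nlap (h : ℂ → ℂ) (z : ℂ) : ℂ := (1 / 4 : ℂ) * lap h z

/-- A function is harmonic on the unit disk if it is twice continuously differentiable there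
and its Laplacian vanishes on the disk. -/
def HarmonicOnDisk (h : ℂ → ℂ) : Prop :=
  ContDiffOn ℝ 2 h unitDisk ∧ ∀ z ∈ unitDisk, lap h z = 0

section BerezinAux


def conjCLM : ℂ →L[ℝ] ℂ := Complex.conjCLE.toContinuousLinearMap

def hasWirt (h : ℂ → ℂ) (hu hv w : ℂ) : Prop :=
  ∃ D : ℂ →L[ℝ] ℂ, HasFDerivAt h D w ∧ ∀ d, D d = hu * d + hv * (starRingEnd ℂ) d

lemma hasWirt_fg {f g : ℂ → ℂ} {f' g' w : ℂ} (hf : HasDerivAt f f' w)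
    (hg : HasDerivAt g g' ((starRingEnd ℂ) w)) :
    hasWirt (fun u => f u * g ((starRingEnd ℂ) u)) (f' * g ((starRingEnd ℂ) w)) (f w * g') w := by
  have h1 : HasFDerivAt (fun u : ℂ => (starRingEnd ℂ) u) conjCLM w := conjCLM.hasFDerivAt
  have h2 := (hg.hasFDerivAt.restrictScalars ℝ).comp w h1
  have h4 := (hf.hasFDerivAt.restrictScalars ℝ).mul h2
  refine ⟨_, h4, fun d => ?_⟩
  simp [conjCLM, smul_eq_mul]
  ring

lemma hasWirt.add {h₁ h₂ : ℂ → ℂ} {u₁ v₁ u₂ v₂ w : ℂ} (H₁ : hasWirt h₁ u₁ v₁ w)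
    (H₂ : hasWirt h₂ u₂ v₂ w) : hasWirt (fun x => h₁ x + h₂ x) (u₁ + u₂) (v₁ + v₂) w := by
  obtain ⟨D₁, hD₁, hE₁⟩ := H₁; obtain ⟨D₂, hD₂, hE₂⟩ := H₂
  exact ⟨D₁ + D₂, hD₁.add hD₂, fun d => by simp [hE₁, hE₂]; ring⟩

lemma hasWirt.sub {h₁ h₂ : ℂ → ℂ} {u₁ v₁ u₂ v₂ w : ℂ} (H₁ : hasWirt h₁ u₁ v₁ w)
    (H₂ : hasWirt h₂ u₂ v₂ w) : hasWirt (fun x => h₁ x - h₂ x) (u₁ - u₂) (v₁ - v₂) w := by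
  obtain ⟨D₁, hD₁, hE₁⟩ := H₁; obtain ⟨D₂, hD₂, hE₂⟩ := H₂
  exact ⟨D₁ - D₂, hD₁.sub hD₂, fun d => by simp [hE₁, hE₂]; ring⟩

lemma hasWirt.const_mul {h : ℂ → ℂ} {u v w : ℂ} (c : ℂ) (H : hasWirt h u v w) :
    hasWirt (fun x => c * h x) (c * u) (c * v) w := by
  obtain ⟨D, hD, hE⟩ := H
  exact ⟨c • D, hD.const_mul c, fun d => by simp [hE, smul_eq_mul]; ring⟩

lemma hasWirt.mul_const {h : ℂ → ℂ} {u v w : ℂ} (c : ℂ) (H : hasWirt h u v w) :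
    hasWirt (fun x => h x * c) (u * c) (v * c) w := by
  obtain ⟨D, hD, hE⟩ := H
  exact ⟨c • D, hD.mul_const c, fun d => by simp [hE, smul_eq_mul]; ring⟩

lemma hasWirt.fderiv_apply {h : ℂ → ℂ} {u v w : ℂ} (H : hasWirt h u v w) (d : ℂ) :
    fderiv ℝ h w d = u * d + v * (starRingEnd ℂ) d := by
  obtain ⟨D, hD, hE⟩ := H; rw [hD.fderiv]; exact hE d

/-! building blocks -/

def Q (b w : ℂ) : ℂ := ((1 - b * w) ^ 2)⁻¹
def Q1 (b w : ℂ) : ℂ := 2 * b / (1 - b * w) ^ 3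
def Q2 (b w : ℂ) : ℂ := 6 * b ^ 2 / (1 - b * w) ^ 4
def P2 (b w : ℂ) : ℂ := w * Q b w
def P2' (b w : ℂ) : ℂ := 1 * Q b w + w * Q1 b w
def P2'' (b w : ℂ) : ℂ := 2 * Q1 b w + w * Q2 b w
def P3 (b w : ℂ) : ℂ := w ^ 2 * Q b w
def P3' (b w : ℂ) : ℂ := 2 * w * Q b w + w ^ 2 * Q1 b w
def P3'' (b w : ℂ) : ℂ := 2 * Q b w + 4 * w * Q1 b w + w ^ 2 * Q2 b w

lemma hQ (b w : ℂ) (h : 1 - b * w ≠ 0) : HasDerivAt (Q b) (Q1 b w) w := by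
  unfold Q Q1
  have h0 : HasDerivAt (fun w : ℂ => 1 - b * w) (-b) w := by
    simpa using ((hasDerivAt_id w).const_mul b).const_sub 1
  have h2 := (h0.fun_pow 2).fun_inv (pow_ne_zero 2 h)
  refine h2.congr_deriv ?_
  field_simp; ring

lemma hQ1 (b w : ℂ) (h : 1 - b * w ≠ 0) : HasDerivAt (Q1 b) (Q2 b w) w := by
  have h0 : HasDerivAt (fun w : ℂ => 1 - b * w) (-b) w := by
    simpa using ((hasDerivAt_id w).const_mul b).const_sub 1
  have h2 := ((h0.fun_pow 3).fun_inv (pow_ne_zero 3 h)).const_mul (2 * b)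
  have h3 : (Q1 b) = (fun w : ℂ => 2 * b * ((1 - b * w) ^ 3)⁻¹) := by
    funext x; rw [Q1, div_eq_mul_inv]
  rw [h3, Q2]
  refine h2.congr_deriv ?_
  field_simp; ring

lemma hP2 (b w : ℂ) (h : 1 - b * w ≠ 0) : HasDerivAt (P2 b) (P2' b w) w := by
  unfold P2 P2'
  simpa using (hasDerivAt_id w).fun_mul (hQ b w h)

lemma hP2' (b w : ℂ) (h : 1 - b * w ≠ 0) : HasDerivAt (P2' b) (P2'' b w) w := by
  unfold P2' P2''
  have := ((hQ b w h).const_mul 1).fun_add ((hasDerivAt_id w).fun_mul (hQ1 b w h))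
  refine this.congr_deriv ?_
  simp only [id_eq]; ring

lemma hP3 (b w : ℂ) (h : 1 - b * w ≠ 0) : HasDerivAt (P3 b) (P3' b w) w := by
  unfold P3 P3'
  have := (hasDerivAt_pow 2 w).fun_mul (hQ b w h)
  refine this.congr_deriv ?_
  ring

lemma hP3' (b w : ℂ) (h : 1 - b * w ≠ 0) : HasDerivAt (P3' b) (P3'' b w) w := by
  have e : P3' b = fun w => 2 * (w * Q b w) + w ^ 2 * Q1 b w := by
    funext x; rw [P3']; ring
  rw [e, P3'']
  have h1 := ((hasDerivAt_id w).fun_mul (hQ b w h)).const_mul 2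
  have h2 := (hasDerivAt_pow 2 w).fun_mul (hQ1 b w h)
  refine (h1.fun_add h2).congr_deriv ?_
  simp only [id_eq]; norm_num; ring

/-! the kernel in separated form -/

def FF (a w : ℂ) : ℂ :=
  Q ((starRingEnd ℂ) a) w * Q a ((starRingEnd ℂ) w)
    - 2 * (P2 ((starRingEnd ℂ) a) w * P2 a ((starRingEnd ℂ) w))
    + P3 ((starRingEnd ℂ) a) w * P3 a ((starRingEnd ℂ) w)

def AA (a w : ℂ) : ℂ :=
  Q1 ((starRingEnd ℂ) a) w * Q a ((starRingEnd ℂ) w)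
    - 2 * (P2' ((starRingEnd ℂ) a) w * P2 a ((starRingEnd ℂ) w))
    + P3' ((starRingEnd ℂ) a) w * P3 a ((starRingEnd ℂ) w)

def BB (a w : ℂ) : ℂ :=
  Q ((starRingEnd ℂ) a) w * Q1 a ((starRingEnd ℂ) w)
    - 2 * (P2 ((starRingEnd ℂ) a) w * P2' a ((starRingEnd ℂ) w))
    + P3 ((starRingEnd ℂ) a) w * P3' a ((starRingEnd ℂ) w)

lemma conj_ne (a w : ℂ) (h : 1 - (starRingEnd ℂ) a * w ≠ 0) :
    1 - a * (starRingEnd ℂ) w ≠ 0 := by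
  intro h0
  apply h
  have := congrArg (starRingEnd ℂ) h0
  simpa using this

lemma wirtF (a w : ℂ) (h : 1 - (starRingEnd ℂ) a * w ≠ 0) :
    hasWirt (FF a) (AA a w) (BB a w) w := by
  have h' : 1 - a * (starRingEnd ℂ) w ≠ 0 := conj_ne a w h
  exact ((hasWirt_fg (hQ _ w h) (hQ a _ h')).sub
    ((hasWirt_fg (hP2 _ w h) (hP2 a _ h')).const_mul 2)).add
    (hasWirt_fg (hP3 _ w h) (hP3 a _ h'))


lemma vQ (b w : ℂ) (h : 1 - b * w ≠ 0) :
    Q b w = ((1 - b * w) ^ 2) * ((1 - b * w) ^ 4)⁻¹ := by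
  unfold Q; field_simp
lemma vQ1 (b w : ℂ) (h : 1 - b * w ≠ 0) :
    Q1 b w = (2 * b * (1 - b * w)) * ((1 - b * w) ^ 4)⁻¹ := by
  unfold Q1; field_simp
lemma vQ2 (b w : ℂ) (h : 1 - b * w ≠ 0) :
    Q2 b w = (6 * b ^ 2) * ((1 - b * w) ^ 4)⁻¹ := by
  unfold Q2; field_simp
lemma vP2 (b w : ℂ) (h : 1 - b * w ≠ 0) :
    P2 b w = (w * (1 - b * w) ^ 2) * ((1 - b * w) ^ 4)⁻¹ := by
  unfold P2; rw [vQ b w h]; ring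
lemma vP2' (b w : ℂ) (h : 1 - b * w ≠ 0) :
    P2' b w = ((1 + b * w) * (1 - b * w)) * ((1 - b * w) ^ 4)⁻¹ := by
  unfold P2'; rw [vQ b w h, vQ1 b w h]; field_simp; ring
lemma vP2'' (b w : ℂ) (h : 1 - b * w ≠ 0) :
    P2'' b w = (4 * b + 2 * b ^ 2 * w) * ((1 - b * w) ^ 4)⁻¹ := by
  unfold P2''; rw [vQ1 b w h, vQ2 b w h]; field_simp; ring
lemma vP3 (b w : ℂ) (h : 1 - b * w ≠ 0) :
    P3 b w = (w ^ 2 * (1 - b * w) ^ 2) * ((1 - b * w) ^ 4)⁻¹ := by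
  unfold P3; rw [vQ b w h]; ring
lemma vP3' (b w : ℂ) (h : 1 - b * w ≠ 0) :
    P3' b w = (2 * w * (1 - b * w)) * ((1 - b * w) ^ 4)⁻¹ := by
  unfold P3'; rw [vQ b w h, vQ1 b w h]; field_simp; ring
lemma vP3'' (b w : ℂ) (h : 1 - b * w ≠ 0) :
    P3'' b w = (2 + 4 * b * w) * ((1 - b * w) ^ 4)⁻¹ := by
  unfold P3''; rw [vQ b w h, vQ1 b w h, vQ2 b w h]; field_simp; ring


def EE (a z : ℂ) : ℂ :=
  (4 * (a * (starRingEnd ℂ) a) + 4 * (z * (starRingEnd ℂ) z) - 2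
      - 2 * ((starRingEnd ℂ) a * z) - 2 * (a * (starRingEnd ℂ) z)
      - 2 * (a * (starRingEnd ℂ) a * (z * (starRingEnd ℂ) z)))
    / ((1 - (starRingEnd ℂ) a * z) * (1 - a * (starRingEnd ℂ) z)) ^ 3

set_option maxHeartbeats 2000000 in
lemma key (a z : ℂ) (hX : 1 - (starRingEnd ℂ) a * z ≠ 0) : nlap (FF a) z = EE a z := by
  have hY : 1 - a * (starRingEnd ℂ) z ≠ 0 := conj_ne a z hX
  have hcont : ContinuousAt (fun w : ℂ => 1 - (starRingEnd ℂ) a * w) z := by fun_prop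
  have hEV : ∀ᶠ w in nhds z, 1 - (starRingEnd ℂ) a * w ≠ 0 := hcont.eventually_ne hX
  have e1 : (fun w => fderiv ℝ (FF a) w 1) =ᶠ[nhds z] (fun w => AA a w + BB a w) := by
    filter_upwards [hEV] with w hw
    simpa using (wirtF a w hw).fderiv_apply 1
  have eI : (fun w => fderiv ℝ (FF a) w Complex.I)
      =ᶠ[nhds z] (fun w => AA a w * Complex.I - BB a w * Complex.I) := by
    filter_upwards [hEV] with w hw
    rw [(wirtF a w hw).fderiv_apply Complex.I]
    simp [Complex.conj_I]
    ring
  have WA := ((hasWirt_fg (hQ1 _ z hX) (hQ a _ hY)).sub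
      ((hasWirt_fg (hP2' _ z hX) (hP2 a _ hY)).const_mul 2)).add
      (hasWirt_fg (hP3' _ z hX) (hP3 a _ hY))
  have WB := ((hasWirt_fg (hQ _ z hX) (hQ1 a _ hY)).sub
      ((hasWirt_fg (hP2 _ z hX) (hP2' a _ hY)).const_mul 2)).add
      (hasWirt_fg (hP3 _ z hX) (hP3' a _ hY))
  have W1 := WA.add WB
  have W2 := (WA.mul_const Complex.I).sub (WB.mul_const Complex.I)
  have E1 : fderiv ℝ (fun w => AA a w + BB a w) z 1 = _ := W1.fderiv_apply 1
  have E2 : fderiv ℝ (fun w => AA a w * Complex.I - BB a w * Complex.I) z Complex.I = _ :=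
    W2.fderiv_apply Complex.I
  have hEE : EE a z = ((4 * (a * (starRingEnd ℂ) a) + 4 * (z * (starRingEnd ℂ) z) - 2
      - 2 * ((starRingEnd ℂ) a * z) - 2 * (a * (starRingEnd ℂ) z)
      - 2 * (a * (starRingEnd ℂ) a * (z * (starRingEnd ℂ) z)))
      * (1 - (starRingEnd ℂ) a * z) * (1 - a * (starRingEnd ℂ) z))
      * (((1 - (starRingEnd ℂ) a * z) ^ 4)⁻¹ * ((1 - a * (starRingEnd ℂ) z) ^ 4)⁻¹) := by
    unfold EE
    field_simp
  unfold nlap lap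
  rw [e1.fderiv_eq, eI.fderiv_eq, E1, E2, hEE]
  simp only [Complex.conj_I, map_one]
  rw [vQ _ z hX, vQ1 _ z hX, vQ2 _ z hX, vP2 _ z hX, vP2' _ z hX, vP2'' _ z hX,
    vP3 _ z hX, vP3' _ z hX, vP3'' _ z hX,
    vQ a _ hY, vQ1 a _ hY, vQ2 a _ hY, vP2 a _ hY, vP2' a _ hY, vP2'' a _ hY,
    vP3 a _ hY, vP3' a _ hY, vP3'' a _ hY]
  ring_nf
  simp only [Complex.I_sq]
  ring

lemma castFF (a w : ℂ) (h : 1 - (starRingEnd ℂ) a * w ≠ 0) :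
    (((1 - ‖w‖ ^ 2) ^ 2 / ‖1 - a * (starRingEnd ℂ) w‖ ^ 4 : ℝ) : ℂ)
      = FF a w := by
  have h' : 1 - a * (starRingEnd ℂ) w ≠ 0 := conj_ne a w h
  have habs : (‖1 - a * (starRingEnd ℂ) w‖ ^ 4 : ℝ)
      = Complex.normSq (1 - a * (starRingEnd ℂ) w) ^ 2 := by
    rw [show (4 : ℕ) = 2 * 2 by norm_num, pow_mul, Complex.sq_norm]
  have e1 : (1 - ‖w‖ ^ 2 : ℝ) = 1 - Complex.normSq w := by rw [Complex.sq_norm]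
  rw [habs, e1, Complex.ofReal_div, Complex.ofReal_pow, Complex.ofReal_pow, Complex.ofReal_sub,
    Complex.ofReal_one, ← Complex.mul_conj, ← Complex.mul_conj]
  have e2 : (starRingEnd ℂ) (1 - a * (starRingEnd ℂ) w) = 1 - (starRingEnd ℂ) a * w := by
    simp [map_sub, map_mul]
  rw [e2]
  rw [FF, P2, P2, P3, P3, vQ _ w h, vQ a _ h']
  field_simp
  ring

lemma nlap_congr {h₁ h₂ : ℂ → ℂ} {z : ℂ} (hev : h₁ =ᶠ[nhds z] h₂) : nlap h₁ z = nlap h₂ z := by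
  have H : fderiv ℝ h₁ =ᶠ[nhds z] fderiv ℝ h₂ := hev.fderiv
  unfold nlap lap
  have e1 : (fun w => fderiv ℝ h₁ w 1) =ᶠ[nhds z] (fun w => fderiv ℝ h₂ w 1) :=
    H.mono (fun w hw => by simp only [hw])
  have eI : (fun w => fderiv ℝ h₁ w Complex.I) =ᶠ[nhds z] (fun w => fderiv ℝ h₂ w Complex.I) :=
    H.mono (fun w hw => by simp only [hw])
  rw [e1.fderiv_eq, eI.fderiv_eq]

lemma disk_ne (u v : ℂ) (hu : ‖u‖ < 1) (hv : ‖v‖ < 1) :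
    1 - (starRingEnd ℂ) u * v ≠ 0 := by
  intro h0
  have h2 : (starRingEnd ℂ) u * v = 1 := by linear_combination -h0
  have h1 : ‖(starRingEnd ℂ) u * v‖ = 1 := by rw [h2, norm_one]
  rw [norm_mul, Complex.norm_conj] at h1
  nlinarith [norm_nonneg u, norm_nonneg v]


end BerezinAux

theorem stmt15 (z ζ : ℂ) (hz : z ∈ unitDisk) (hζ : ζ ∈ unitDisk) :
    nlap (fun w => (((1 - ‖w‖ ^ 2) ^ 2
        / ‖1 - ζ * (starRingEnd ℂ) w‖ ^ 4 : ℝ) : ℂ)) z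
      = nlap (fun w => (((1 - ‖w‖ ^ 2) ^ 2
        / ‖1 - (starRingEnd ℂ) w * z‖ ^ 4 : ℝ) : ℂ)) ζ := by
  have hz' : ‖z‖ < 1 := hz
  have hζ' : ‖ζ‖ < 1 := hζ
  have h1 : 1 - (starRingEnd ℂ) ζ * z ≠ 0 := disk_ne ζ z hζ' hz'
  have h2 : 1 - (starRingEnd ℂ) z * ζ ≠ 0 := disk_ne z ζ hz' hζ'
  have hcont1 : ContinuousAt (fun w : ℂ => 1 - (starRingEnd ℂ) ζ * w) z := by fun_prop
  have hcont2 : ContinuousAt (fun w : ℂ => 1 - (starRingEnd ℂ) z * w) ζ := by fun_prop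
  have ev1 : (fun w => (((1 - ‖w‖ ^ 2) ^ 2
      / ‖1 - ζ * (starRingEnd ℂ) w‖ ^ 4 : ℝ) : ℂ)) =ᶠ[nhds z] FF ζ :=
    (hcont1.eventually_ne h1).mono (fun w hw => castFF ζ w hw)
  have ev2 : (fun w => (((1 - ‖w‖ ^ 2) ^ 2
      / ‖1 - z * (starRingEnd ℂ) w‖ ^ 4 : ℝ) : ℂ)) =ᶠ[nhds ζ] FF z :=
    (hcont2.eventually_ne h2).mono (fun w hw => castFF z w hw)
  have fe : (fun w => (((1 - ‖w‖ ^ 2) ^ 2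
        / ‖1 - (starRingEnd ℂ) w * z‖ ^ 4 : ℝ) : ℂ))
      = (fun w => (((1 - ‖w‖ ^ 2) ^ 2
        / ‖1 - z * (starRingEnd ℂ) w‖ ^ 4 : ℝ) : ℂ)) := by
    funext w; rw [mul_comm ((starRingEnd ℂ) w) z]
  rw [nlap_congr ev1, key ζ z h1, fe, nlap_congr ev2, key z ζ h2]
  have dn : ((1 - (starRingEnd ℂ) z * ζ) * (1 - z * (starRingEnd ℂ) ζ))
      = ((1 - (starRingEnd ℂ) ζ * z) * (1 - ζ * (starRingEnd ℂ) z)) := by ring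
  unfold EE
  rw [dn]
  ring
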